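/- For every real δ with 1 < δ < 2, the improper integral ∫_0^∞ x^{-δ} sin(x) dx converges and equals Γ(1-δ) cos(πδ/2), where Γ(1-δ) is the Gamma function at the negative argument 1-δ ∈ (-1,0). -/

import Mathlib

open Real MeasureTheory intervalIntegral Filter

open Set


-- 1 - cos x ≤ x^2/2

lemma msx_one_sub_cos_le (x : ℝ) : 1 - Real.cos x ≤ x ^ 2 / 2 := by
  have h1 : Real.sin (x/2) ^ 2 = (1 - Real.cos x) / 2 := by
    have := Real.abs_sin_half x
    have h2 : Real.sin (x/2) ^ 2 = |Real.sin (x/2)| ^ 2 := (sq_abs _).symm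
    rw [h2, this, sq_sqrt]
    nlinarith [Real.cos_le_one x]
  have h3 : Real.sin (x/2) ^ 2 ≤ (x/2) ^ 2 := by
    rw [← sq_abs (Real.sin _), ← sq_abs (x/2)]
    exact pow_le_pow_left₀ (abs_nonneg _) Real.abs_sin_le_abs 2
  nlinarith

-- generic integrability helper

lemma msx_integrableOn_Ioi {f : ℝ → ℝ} (hc : ContinuousOn f (Ioi 0)) {p q C D : ℝ}
    (hp : -1 < p) (hq : q < -1)
    (h1 : ∀ x ∈ Ioc (0:ℝ) 1, |f x| ≤ C * x ^ p)
    (h2 : ∀ x ∈ Ici (1:ℝ), |f x| ≤ D * x ^ q) :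
    IntegrableOn f (Ioi 0) := by
  have hmeas : AEStronglyMeasurable f (volume.restrict (Ioi (0:ℝ))) :=
    hc.aestronglyMeasurable measurableSet_Ioi
  have hIoc : IntegrableOn f (Ioc 0 1) := by
    have hg : IntegrableOn (fun x => C * x ^ p) (Ioc (0:ℝ) 1) := by
      have := (intervalIntegral.intervalIntegrable_rpow' (a := 0) (b := 1) hp)
      rw [intervalIntegrable_iff_integrableOn_Ioc_of_le zero_le_one] at this
      exact this.const_mul C
    refine Integrable.mono' hg (hmeas.mono_set Ioc_subset_Ioi_self) ?_
    exact (ae_restrict_iff' measurableSet_Ioc).2 (Filter.Eventually.of_forall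
      fun x hx => by simpa [Real.norm_eq_abs] using h1 x hx)
  have hIoi1 : IntegrableOn f (Ioi 1) := by
    have hg : IntegrableOn (fun x => D * x ^ q) (Ioi (1:ℝ)) :=
      (integrableOn_Ioi_rpow_of_lt hq one_pos).const_mul D
    refine Integrable.mono' hg (hmeas.mono_set (Ioi_subset_Ioi zero_le_one)) ?_
    exact (ae_restrict_iff' measurableSet_Ioi).2 (Filter.Eventually.of_forall
      fun x hx => by simpa [Real.norm_eq_abs] using h2 x (le_of_lt (mem_Ioi.1 hx)))
  have : Ioi (0:ℝ) = Ioc 0 1 ∪ Ioi 1 := by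
    rw [Ioc_union_Ioi_eq_Ioi]; exact zero_le_one
  rw [this]
  exact hIoc.union hIoi1


-- real reflection beta integral

lemma msx_beta (a : ℝ) (ha : 0 < a) (ha' : a < 1) :
    ∫ x in (0:ℝ)..1, x ^ (a-1) * (1-x) ^ (-a) = π / Real.sin (π * a) := by
  have h1 : (0:ℝ) < 1 - a := by linarith
  have key := Complex.Gamma_mul_Gamma_eq_betaIntegral (s := (a:ℂ)) (t := ((1-a:ℝ):ℂ))
    (by simpa using ha) (by simpa using h1)
  have hsum : (a:ℂ) + ((1-a:ℝ):ℂ) = 1 := by push_cast; ring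
  rw [hsum, Complex.Gamma_one, one_mul] at key
  have hrefl : Complex.Gamma (a:ℂ) * Complex.Gamma ((1-a:ℝ):ℂ) = (π:ℂ) / Complex.sin (π * a) := by
    have := Complex.Gamma_mul_Gamma_one_sub (a:ℂ)
    rw [← this]; norm_num
  rw [hrefl] at key
  -- betaIntegral = coercion of real integral
  have hbeta : Complex.betaIntegral (a:ℂ) ((1-a:ℝ):ℂ)
      = ((∫ x in (0:ℝ)..1, x ^ (a-1) * (1-x) ^ (-a) : ℝ) : ℂ) := by
    rw [Complex.betaIntegral, ← intervalIntegral.integral_ofReal]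
    refine intervalIntegral.integral_congr fun x hx => ?_
    rw [uIcc_of_le zero_le_one] at hx
    obtain ⟨hx0, hx1⟩ := hx
    have e1 : ((x:ℂ)) ^ ((a:ℂ) - 1) = ((x ^ (a-1) : ℝ) : ℂ) := by
      rw [Complex.ofReal_cpow hx0]; push_cast; ring_nf
    have e2 : ((1:ℂ) - (x:ℂ)) ^ (((1-a:ℝ):ℂ) - 1) = (((1-x) ^ (-a) : ℝ) : ℂ) := by
      have : ((1:ℂ) - (x:ℂ)) = (((1-x : ℝ)):ℂ) := by push_cast; ring
      rw [this, Complex.ofReal_cpow (by linarith)]; push_cast; ring_nf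
    rw [e1, e2]; push_cast; ring
  rw [hbeta] at key
  have hsin : Complex.sin ((π:ℂ) * a) = ((Real.sin (π*a) : ℝ) : ℂ) := by
    rw [Complex.ofReal_sin]; push_cast; ring_nf
  rw [hsin] at key
  have : ((π / Real.sin (π*a) : ℝ) : ℂ) = ((∫ x in (0:ℝ)..1, x ^ (a-1) * (1-x) ^ (-a) : ℝ) : ℂ) := by
    rw [Complex.ofReal_div]
    exact key
  exact_mod_cast this.symm

lemma msx_K (a : ℝ) (ha : 0 < a) (ha' : a < 1) :
    ∫ u in Ioi (0:ℝ), u ^ (a-1) / (1+u) = π / Real.sin (π * a) := by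
  have himg : (fun t : ℝ => t / (1+t)) '' Ioi 0 = Ioo 0 1 := by
    ext x
    constructor
    · rintro ⟨u, hu, rfl⟩
      simp only [mem_Ioi] at hu
      have hu' : (0:ℝ) < 1 + u := by linarith
      constructor
      · positivity
      · rw [div_lt_one hu']; linarith
    · rintro ⟨hx0, hx1⟩
      refine ⟨x / (1-x), ?_, ?_⟩
      · have : (0:ℝ) < 1 - x := by linarith
        exact div_pos hx0 this
      · have h1 : (0:ℝ) < 1 - x := by linarith
        field_simp
        ring
  have hderiv : ∀ t ∈ Ioi (0:ℝ), HasDerivWithinAt (fun t : ℝ => t / (1+t))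
      (1 / (1+t)^2) (Ioi 0) t := by
    intro t ht
    simp only [mem_Ioi] at ht
    have h1 : (1:ℝ) + t ≠ 0 := by positivity
    have := (hasDerivAt_id t).div ((hasDerivAt_id t).const_add 1) h1
    simp only [id] at this
    refine this.hasDerivWithinAt.congr_deriv ?_
    ring
  have hinj : InjOn (fun t : ℝ => t / (1+t)) (Ioi 0) := by
    intro u hu v hv h
    simp only [mem_Ioi] at hu hv
    have h1 : (1:ℝ) + u ≠ 0 := by positivity
    have h2 : (1:ℝ) + v ≠ 0 := by positivity
    field_simp at h
    linarith
  have := MeasureTheory.integral_image_eq_integral_abs_deriv_smul measurableSet_Ioi hderiv hinj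
    (fun x => x ^ (a-1) * (1-x) ^ (-a))
  rw [himg] at this
  have hL : ∫ x in Ioo (0:ℝ) 1, x ^ (a-1) * (1-x) ^ (-a) = π / Real.sin (π * a) := by
    rw [← MeasureTheory.integral_Ioc_eq_integral_Ioo, ← intervalIntegral.integral_of_le zero_le_one]
    exact msx_beta a ha ha'
  rw [hL] at this
  rw [this]
  refine (setIntegral_congr_fun measurableSet_Ioi fun t ht => ?_).symm
  simp only [mem_Ioi] at ht
  have h1 : (0:ℝ) < 1 + t := by linarith
  have e1 : (t / (1+t)) ^ (a-1) = t ^ (a-1) / (1+t) ^ (a-1) :=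
    Real.div_rpow ht.le h1.le (a-1)
  have e2 : ((1:ℝ) - t / (1+t)) = 1 / (1+t) := by field_simp; ring
  have e3 : ((1:ℝ) / (1+t)) ^ (-a) = (1+t) ^ a := by
    rw [Real.div_rpow zero_le_one h1.le, Real.one_rpow, Real.rpow_neg h1.le]
    field_simp
  have e4 : (1+t) ^ a / (1+t) ^ (a-1) = (1+t) := by
    rw [← Real.rpow_sub h1]; norm_num
  have e5 : |1 / (1+t)^2| = 1/(1+t)^2 := by
    rw [abs_of_pos]; positivity
  have e6 : t^(a-1)/(1+t)^(a-1) * (1+t)^a = t^(a-1) * (1+t) := by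
    rw [div_mul_eq_mul_div, mul_div_assoc, e4]
  rw [e2, e3, e5, smul_eq_mul, e1, e6]
  have h2 : (1+t) ≠ 0 := h1.ne'
  field_simp

lemma msx_J (b : ℝ) (hb : 0 < b) (hb' : b < 2) :
    ∫ t in Ioi (0:ℝ), t ^ (b-1) / (1+t^2) = π / (2 * Real.sin (π * b / 2)) := by
  have h2 : (2:ℝ) ≠ 0 := two_ne_zero
  have key := MeasureTheory.integral_comp_rpow_Ioi
    (fun y => y ^ (b/2-1) / (1+y)) (p := 2) h2
  rw [msx_K (b/2) (by linarith) (by linarith)] at key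
  have congr1 : ∀ x ∈ Ioi (0:ℝ),
      (|(2:ℝ)| * x ^ ((2:ℝ) - 1)) • ((x ^ (2:ℝ)) ^ (b/2-1) / (1+x ^ (2:ℝ)))
        = 2 * (x ^ (b-1) / (1+x^2)) := by
    intro x hx
    simp only [mem_Ioi] at hx
    have e0 : x ^ ((2:ℝ) - 1) = x := by norm_num
    have e1 : x ^ (2:ℝ) = x ^ 2 := by
      rw [← Real.rpow_natCast x 2]; norm_num
    have e2 : (x ^ (2:ℝ)) ^ (b/2-1) = x ^ (b-2) := by
      rw [← Real.rpow_mul hx.le]; norm_num; ring_nf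
    have e3 : x * x ^ (b-2) = x ^ (b-1) := by
      nth_rewrite 1 [← Real.rpow_one x]
      rw [← Real.rpow_add hx]; congr 1; ring
    rw [e0, e2, e1, smul_eq_mul]
    rw [abs_of_pos (by norm_num : (0:ℝ) < 2), ← e3]
    ring
  rw [setIntegral_congr_fun measurableSet_Ioi congr1] at key
  rw [MeasureTheory.integral_const_mul] at key
  have hπ : π * (b/2) = π * b / 2 := by ring
  rw [hπ] at key
  have hI : ∫ t in Ioi (0:ℝ), t ^ (b-1) / (1+t^2) = (π / Real.sin (π * b / 2)) / 2 := by
    linarith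
  rw [hI, div_div]
  ring_nf

lemma msx_laplace (t : ℝ) (ht : 0 < t) :
    ∫ x in Ioi (0:ℝ), Real.exp (-(t*x)) * (1 - Real.cos x) = 1/(t*(1+t^2)) := by
  set F : ℝ → ℝ := fun x =>
    -Real.exp (-(t*x))/t - Real.exp (-(t*x)) * (Real.sin x - t * Real.cos x)/(1+t^2) with hF
  have ht2 : (0:ℝ) < 1 + t^2 := by positivity
  have hderiv : ∀ x ∈ Ici (0:ℝ), HasDerivAt F (Real.exp (-(t*x)) * (1 - Real.cos x)) x := by
    intro x _
    have hexp : HasDerivAt (fun x : ℝ => Real.exp (-(t*x))) (-t * Real.exp (-(t*x))) x := by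
      have h1 : HasDerivAt (fun x : ℝ => -(t*x)) (-t) x := by
        exact (((hasDerivAt_id' x).const_mul t).neg).congr_deriv (by ring)
      exact ((Real.hasDerivAt_exp _).comp x h1).congr_deriv (by ring)
    have hsc : HasDerivAt (fun x : ℝ => Real.sin x - t * Real.cos x)
        (Real.cos x + t * Real.sin x) x := by
      exact
        ((Real.hasDerivAt_sin x).sub ((Real.hasDerivAt_cos x).const_mul t)).congr_deriv (by ring)
    have h2 := ((hexp.mul hsc).div_const (1+t^2))
    have h3 := (hexp.div_const t)
    have h4 := (h3.neg.sub h2)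
    have hfun : F = fun x => -(Real.exp (-(t*x))/t)
        - Real.exp (-(t*x)) * (Real.sin x - t * Real.cos x)/(1+t^2) := by
      funext y; rw [hF]; ring
    rw [hfun]
    refine h4.congr_deriv ?_
    field_simp
    ring
  have hint : IntegrableOn (fun x => Real.exp (-(t*x)) * (1 - Real.cos x)) (Ioi 0) := by
    have hg : IntegrableOn (fun x => 2 * Real.exp (-t*x)) (Ioi (0:ℝ)) :=
      (exp_neg_integrableOn_Ioi 0 ht).const_mul 2
    refine Integrable.mono' hg ?_ ?_
    · apply Continuous.aestronglyMeasurable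
      continuity
    · refine Filter.Eventually.of_forall fun x => ?_
      have h1 : |1 - Real.cos x| ≤ 2 := by
        have := Real.cos_le_one x
        have := Real.neg_one_le_cos x
        rw [abs_le]; constructor <;> linarith
      rw [Real.norm_eq_abs, abs_mul]
      have e4 : -t*x = -(t*x) := by ring
      rw [e4]
      calc |Real.exp (-(t*x))| * |1 - Real.cos x| ≤ Real.exp (-(t*x)) * 2 := by
            rw [abs_of_pos (Real.exp_pos _)]
            exact mul_le_mul_of_nonneg_left h1 (Real.exp_pos _).le
        _ = 2 * Real.exp (-(t*x)) := by ring
  have htend : Tendsto F atTop (nhds 0) := by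
    have h1 : Tendsto (fun x : ℝ => Real.exp (-(t*x))) atTop (nhds 0) := by
      have hmul : Tendsto (fun x : ℝ => t * x) atTop atTop :=
        Tendsto.const_mul_atTop ht tendsto_id
      simpa [Function.comp_def] using (Real.tendsto_exp_neg_atTop_nhds_zero.comp hmul)
    have hb : ∀ x : ℝ, ‖F x‖ ≤ (1/t + (1+t)/(1+t^2)) * Real.exp (-(t*x)) := by
      intro x
      rw [hF]
      have he : (0:ℝ) < Real.exp (-(t*x)) := Real.exp_pos _
      have hs1 : |Real.sin x - t * Real.cos x| ≤ 1 + t := by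
        calc |Real.sin x - t * Real.cos x| ≤ |Real.sin x| + |t * Real.cos x| := abs_sub _ _
          _ ≤ 1 + t := by
            have := Real.abs_sin_le_one x
            have h3 : |t * Real.cos x| ≤ t := by
              rw [abs_mul, abs_of_pos ht]
              have := Real.abs_cos_le_one x
              nlinarith
            linarith
      calc ‖-Real.exp (-(t*x))/t - Real.exp (-(t*x)) * (Real.sin x - t * Real.cos x)/(1+t^2)‖
          ≤ ‖-Real.exp (-(t*x))/t‖ + ‖Real.exp (-(t*x)) * (Real.sin x - t * Real.cos x)/(1+t^2)‖ :=
            norm_sub_le _ _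
        _ ≤ 1/t * Real.exp (-(t*x)) + (1+t)/(1+t^2) * Real.exp (-(t*x)) := by
            have n1 : ‖-Real.exp (-(t*x))/t‖ = 1/t * Real.exp (-(t*x)) := by
              rw [Real.norm_eq_abs, abs_div, abs_neg, abs_of_pos he, abs_of_pos ht]; ring
            have n2 : ‖Real.exp (-(t*x)) * (Real.sin x - t * Real.cos x)/(1+t^2)‖
                ≤ (1+t)/(1+t^2) * Real.exp (-(t*x)) := by
              rw [Real.norm_eq_abs, abs_div, abs_mul, abs_of_pos he, abs_of_pos ht2]
              calc Real.exp (-(t*x)) * |Real.sin x - t * Real.cos x| / (1+t^2)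
                  ≤ Real.exp (-(t*x)) * (1+t) / (1+t^2) := by gcongr
                _ = (1+t)/(1+t^2) * Real.exp (-(t*x)) := by ring
            rw [n1]
            exact add_le_add le_rfl n2
        _ = (1/t + (1+t)/(1+t^2)) * Real.exp (-(t*x)) := by ring
    have h2 : Tendsto (fun x : ℝ => (1/t + (1+t)/(1+t^2)) * Real.exp (-(t*x))) atTop (nhds 0) := by
      simpa using h1.const_mul (1/t + (1+t)/(1+t^2))
    exact squeeze_zero_norm hb h2
  have := MeasureTheory.integral_Ioi_of_hasDerivAt_of_tendsto' hderiv hint htend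
  rw [this, hF]
  simp only [mul_zero, neg_zero, Real.exp_zero, Real.sin_zero, Real.cos_zero]
  field_simp
  ring

lemma msx_cont_rpow (r : ℝ) : ContinuousOn (fun x : ℝ => x ^ r) (Ioi 0) := fun x hx =>
  (Real.continuousAt_rpow_const x r (Or.inl (ne_of_gt hx))).continuousWithinAt

lemma msx_J_integrable (b : ℝ) (hb : 0 < b) (hb' : b < 2) :
    IntegrableOn (fun t : ℝ => t ^ (b-1) / (1+t^2)) (Ioi 0) := by
  refine msx_integrableOn_Ioi ?_ (p := b-1) (q := b-3) (C := 1) (D := 1)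
    (by linarith) (by linarith) ?_ ?_
  · exact (msx_cont_rpow (b-1)).div (by fun_prop) (fun x _ => by positivity)
  · intro x hx
    obtain ⟨hx0, hx1⟩ := hx
    have h1 : (0:ℝ) < 1 + x^2 := by positivity
    rw [abs_of_nonneg (by positivity), one_mul]
    rw [div_le_iff₀ h1]
    nlinarith [Real.rpow_nonneg hx0.le (b-1)]
  · intro x hx
    simp only [mem_Ici] at hx
    have hx0 : (0:ℝ) < x := lt_of_lt_of_le one_pos hx
    have h1 : (0:ℝ) < 1 + x^2 := by positivity
    rw [abs_of_nonneg (by positivity), one_mul]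
    have e1 : x ^ (b-3) = x ^ (b-1) / x ^ 2 := by
      rw [← Real.rpow_natCast x 2, ← Real.rpow_sub hx0]
      congr 1
      ring
    rw [e1]
    apply div_le_div_of_nonneg_left (Real.rpow_nonneg hx0.le _) (by positivity)
    nlinarith

lemma msx_phi_integrable (δ : ℝ) (hδ1 : 1 < δ) (hδ2 : δ < 2) :
    IntegrableOn (fun x : ℝ => x ^ (-δ-1) * (1 - Real.cos x)) (Ioi 0) := by
  refine msx_integrableOn_Ioi ?_ (p := 1-δ) (q := -δ-1) (C := 1/2) (D := 2)
    (by linarith) (by linarith) ?_ ?_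
  · exact (msx_cont_rpow (-δ-1)).mul (by fun_prop)
  · intro x hx
    obtain ⟨hx0, hx1⟩ := hx
    have h1 : 0 ≤ 1 - Real.cos x := by nlinarith [Real.cos_le_one x]
    rw [abs_of_nonneg (mul_nonneg (Real.rpow_nonneg hx0.le _) h1)]
    have h2 := msx_one_sub_cos_le x
    have key : x ^ (-δ-1) * x ^ (2:ℝ) = x ^ (1-δ) := by
      rw [← Real.rpow_add hx0]; congr 1; ring
    calc x ^ (-δ-1) * (1 - Real.cos x) ≤ x ^ (-δ-1) * (x^2/2) :=
          mul_le_mul_of_nonneg_left h2 (Real.rpow_nonneg hx0.le _)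
      _ = 1/2 * x ^ (1-δ) := by
          rw [← Real.rpow_natCast x 2, ← key]; ring
  · intro x hx
    simp only [mem_Ici] at hx
    have hx0 : (0:ℝ) < x := lt_of_lt_of_le one_pos hx
    have h1 : 0 ≤ 1 - Real.cos x := by nlinarith [Real.cos_le_one x]
    rw [abs_of_nonneg (mul_nonneg (Real.rpow_nonneg hx0.le _) h1)]
    have h2 : 1 - Real.cos x ≤ 2 := by nlinarith [Real.neg_one_le_cos x]
    calc x ^ (-δ-1) * (1 - Real.cos x) ≤ x ^ (-δ-1) * 2 :=
          mul_le_mul_of_nonneg_left h2 (Real.rpow_nonneg hx0.le _)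
      _ = 2 * x ^ (-δ-1) := by ring

lemma msx_f_integrable (δ : ℝ) (hδ1 : 1 < δ) (hδ2 : δ < 2) {A : ℝ} (hA : 0 < A) :
    IntervalIntegrable (fun x : ℝ => x ^ (-δ) * Real.sin x) volume 0 A := by
  · rw [intervalIntegrable_iff_integrableOn_Ioc_of_le hA.le]
    have hg : IntegrableOn (fun x : ℝ => x ^ (1-δ)) (Ioc (0:ℝ) A) := by
      have := intervalIntegral.intervalIntegrable_rpow' (a := 0) (b := A) (r := 1-δ) (by linarith)
      rwa [intervalIntegrable_iff_integrableOn_Ioc_of_le hA.le] at this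
    refine Integrable.mono' hg ?_ ?_
    · refine ContinuousOn.aestronglyMeasurable ?_ measurableSet_Ioc
      refine ((msx_cont_rpow (-δ)).mono ?_).mul (by fun_prop)
      exact fun x hx => hx.1
    · refine (ae_restrict_iff' measurableSet_Ioc).2 (Filter.Eventually.of_forall fun x hx => ?_)
      obtain ⟨hx0, hxA⟩ := hx
      rw [Real.norm_eq_abs, abs_mul, abs_of_nonneg (Real.rpow_nonneg hx0.le _)]
      have e1 : x ^ (1-δ) = x ^ (-δ) * x := by
        nth_rewrite 3 [← Real.rpow_one x]
        rw [← Real.rpow_add hx0]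
        congr 1
        ring
      rw [e1]
      refine mul_le_mul_of_nonneg_left ?_ (Real.rpow_nonneg hx0.le _)
      calc |Real.sin x| ≤ |x| := Real.abs_sin_le_abs
        _ = x := abs_of_pos hx0

lemma msx_phi_value (δ : ℝ) (hδ1 : 1 < δ) (hδ2 : δ < 2) :
    ∫ x in Ioi (0:ℝ), x ^ (-δ-1) * (1 - Real.cos x)
      = π / (2 * Real.sin (π * δ / 2)) / Real.Gamma (δ+1) := by
  have hδ0 : (0:ℝ) < δ := by linarith
  have hΓpos : 0 < Real.Gamma (δ+1) := Real.Gamma_pos_of_pos (by linarith)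
  set H : ℝ → ℝ → ℝ := fun x t => t ^ δ * Real.exp (-(x*t)) * (1 - Real.cos x) with hH
  -- slice integral over t
  have hslice_val : ∀ x ∈ Ioi (0:ℝ), ∫ t in Ioi (0:ℝ), H x t
      = Real.Gamma (δ+1) * (x ^ (-δ-1) * (1 - Real.cos x)) := by
    intro x hx
    simp only [mem_Ioi] at hx
    have base := Real.integral_rpow_mul_exp_neg_mul_Ioi (a := δ+1) (r := x) (by linarith) hx
    simp only [add_sub_cancel_right] at base
    have e0 : ∀ t : ℝ, H x t = (t ^ δ * Real.exp (-(x*t))) * (1 - Real.cos x) := by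
      intro t; rw [hH]
    calc ∫ t in Ioi (0:ℝ), H x t
        = ∫ t in Ioi (0:ℝ), (t ^ δ * Real.exp (-(x*t))) * (1 - Real.cos x) := by rfl
      _ = (∫ t in Ioi (0:ℝ), t ^ δ * Real.exp (-(x*t))) * (1 - Real.cos x) :=
          integral_mul_const _ _
      _ = ((1/x) ^ (δ+1) * Real.Gamma (δ+1)) * (1 - Real.cos x) := by rw [base]
      _ = Real.Gamma (δ+1) * (x ^ (-δ-1) * (1 - Real.cos x)) := by
          have e1 : (1/x) ^ (δ+1) = x ^ (-δ-1) := by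
            rw [one_div, Real.inv_rpow hx.le, ← Real.rpow_neg hx.le]
            congr 1; ring
          rw [e1]; ring
  -- slice integrability over t
  have hslice_int : ∀ x ∈ Ioi (0:ℝ), IntegrableOn (fun t => H x t) (Ioi 0) := by
    intro x hx
    simp only [mem_Ioi] at hx
    have base : IntegrableOn (fun t : ℝ => t ^ δ * Real.exp (-x * t ^ (1:ℝ))) (Ioi 0) :=
      integrableOn_rpow_mul_exp_neg_mul_rpow (by linarith) zero_lt_one hx
    have base' : IntegrableOn (fun t : ℝ => t ^ δ * Real.exp (-(x * t))) (Ioi 0) := by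
      refine base.congr_fun (fun t ht => ?_) measurableSet_Ioi
      simp only [Real.rpow_one]; ring_nf
    exact base'.mul_const _
  -- measurability of uncurried H on the product
  have hmeas : AEStronglyMeasurable (Function.uncurry H)
      ((volume.restrict (Ioi (0:ℝ))).prod (volume.restrict (Ioi (0:ℝ)))) := by
    apply Measurable.aestronglyMeasurable
    rw [hH]
    fun_prop
  -- nonnegativity of H on the relevant region
  have hnonneg : ∀ x ∈ Ioi (0:ℝ), ∀ t ∈ Ioi (0:ℝ), 0 ≤ H x t := by
    intro x _ t ht
    simp only [mem_Ioi] at ht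
    have := Real.cos_le_one x
    have h1 : (0:ℝ) ≤ 1 - Real.cos x := by linarith
    have h2 : (0:ℝ) ≤ t ^ δ := Real.rpow_nonneg ht.le _
    positivity
  -- integrability on product
  have hprod : Integrable (Function.uncurry H)
      ((volume.restrict (Ioi (0:ℝ))).prod (volume.restrict (Ioi (0:ℝ)))) := by
    rw [MeasureTheory.integrable_prod_iff hmeas]
    constructor
    · refine (ae_restrict_iff' measurableSet_Ioi).2 (Filter.Eventually.of_forall fun x hx => ?_)
      exact hslice_int x hx
    · have hφ := (msx_phi_integrable δ hδ1 hδ2).const_mul (Real.Gamma (δ+1))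
      refine hφ.congr ?_
      refine (ae_restrict_iff' measurableSet_Ioi).2 (Filter.Eventually.of_forall fun x hx => ?_)
      have e2 : ∫ t in Ioi (0:ℝ), ‖H x t‖ = ∫ t in Ioi (0:ℝ), H x t := by
        refine setIntegral_congr_fun measurableSet_Ioi fun t ht => ?_
        rw [Real.norm_eq_abs, abs_of_nonneg (hnonneg x hx t ht)]
      simp only [Function.uncurry_apply_pair]
      rw [e2, hslice_val x hx]
  -- swap
  have hswap := MeasureTheory.integral_integral_swap (f := H) hprod
  -- LHS of swap
  have hL : ∫ x in Ioi (0:ℝ), ∫ t in Ioi (0:ℝ), H x t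
      = Real.Gamma (δ+1) * ∫ x in Ioi (0:ℝ), x ^ (-δ-1) * (1 - Real.cos x) := by
    rw [setIntegral_congr_fun measurableSet_Ioi hslice_val]
    exact MeasureTheory.integral_const_mul _ _
  -- RHS of swap
  have hR : ∫ t in Ioi (0:ℝ), ∫ x in Ioi (0:ℝ), H x t = π / (2 * Real.sin (π * δ / 2)) := by
    have congr2 : ∀ t ∈ Ioi (0:ℝ),
        (∫ x in Ioi (0:ℝ), H x t) = t ^ (δ-1) / (1+t^2) := by
      intro t ht
      simp only [mem_Ioi] at ht
      have e3 : ∀ x : ℝ, H x t = t ^ δ * (Real.exp (-(t*x)) * (1 - Real.cos x)) := by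
        intro x; rw [hH]; ring_nf
      rw [show (fun x => H x t) = fun x => t ^ δ * (Real.exp (-(t*x)) * (1 - Real.cos x)) from
        funext e3]
      rw [MeasureTheory.integral_const_mul, msx_laplace t ht]
      rw [show t ^ (δ-1) = t ^ δ / t by rw [Real.rpow_sub ht, Real.rpow_one]]
      field_simp
    rw [setIntegral_congr_fun measurableSet_Ioi congr2]
    exact msx_J δ hδ0 hδ2
  rw [hL, hR] at hswap
  rw [← hswap]
  field_simp

lemma msx_ibp (δ : ℝ) (hδ1 : 1 < δ) (hδ2 : δ < 2) {A : ℝ} (hA : 0 < A) :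
    ∫ x in (0:ℝ)..A, x ^ (-δ) * Real.sin x
      = A ^ (-δ) * (1 - Real.cos A) + δ * ∫ x in (0:ℝ)..A, x ^ (-δ-1) * (1 - Real.cos x) := by
  set G : ℝ → ℝ := fun x => x ^ (-δ) * (1 - Real.cos x) with hG
  set ψ : ℝ → ℝ := fun x => x ^ (-δ) * Real.sin x - δ * (x ^ (-δ-1) * (1 - Real.cos x)) with hψ
  have hφint : IntervalIntegrable (fun x : ℝ => x ^ (-δ-1) * (1 - Real.cos x)) volume 0 A := by
    rw [intervalIntegrable_iff_integrableOn_Ioc_of_le hA.le]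
    exact (msx_phi_integrable δ hδ1 hδ2).mono_set Ioc_subset_Ioi_self
  have hfint := msx_f_integrable δ hδ1 hδ2 hA
  have hψint : IntervalIntegrable ψ volume 0 A := hfint.sub (hφint.const_mul δ)
  have hcont : ContinuousOn G (Icc 0 A) := by
    intro x hx
    rcases eq_or_lt_of_le hx.1 with h0 | h0
    · -- continuity at 0
      subst h0
      have hub : ∀ y ∈ Icc (0:ℝ) A, G y ≤ y ^ (2-δ) / 2 := by
        intro y hy
        rcases eq_or_lt_of_le hy.1 with h1 | h1
        · subst h1
          rw [hG]
          simp [Real.zero_rpow (by linarith : -δ ≠ 0), Real.zero_rpow (by linarith : (2:ℝ)-δ ≠ 0)]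
        · have key : y ^ (-δ) * y ^ (2:ℝ) = y ^ (2-δ) := by
            rw [← Real.rpow_add h1]; congr 1; ring
          have h2 := msx_one_sub_cos_le y
          calc G y ≤ y ^ (-δ) * (y^2/2) :=
                mul_le_mul_of_nonneg_left h2 (Real.rpow_nonneg hy.1 _)
            _ = y ^ (2-δ) / 2 := by rw [← key, ← Real.rpow_natCast y 2]; ring
      have hlb : ∀ y ∈ Icc (0:ℝ) A, 0 ≤ G y := by
        intro y hy
        have := Real.cos_le_one y
        have h1 : (0:ℝ) ≤ 1 - Real.cos y := by linarith
        exact mul_nonneg (Real.rpow_nonneg hy.1 _) h1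
      have htu : Tendsto (fun y : ℝ => y ^ (2-δ) / 2) (nhdsWithin 0 (Icc 0 A)) (nhds 0) := by
        have hc : ContinuousAt (fun y : ℝ => y ^ (2-δ)) 0 :=
          Real.continuousAt_rpow_const 0 (2-δ) (Or.inr (by linarith))
        have h0 : (0:ℝ) ^ (2-δ) = 0 := Real.zero_rpow (by linarith)
        have := (hc.continuousWithinAt (s := Icc 0 A)).tendsto
        rw [h0] at this
        simpa using this.div_const 2
      have hG0 : G 0 = 0 := by rw [hG]; simp
      rw [ContinuousWithinAt, hG0]
      refine tendsto_of_tendsto_of_tendsto_of_le_of_le' tendsto_const_nhds htu ?_ ?_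
      · exact eventually_nhdsWithin_of_forall hlb
      · exact eventually_nhdsWithin_of_forall hub
    · -- continuity at positive points
      have : ContinuousAt G x := by
        apply ContinuousAt.mul
        · exact Real.continuousAt_rpow_const x (-δ) (Or.inl h0.ne')
        · fun_prop
      exact this.continuousWithinAt
  have hderiv : ∀ x ∈ Ioo (0:ℝ) A, HasDerivWithinAt G (ψ x) (Ioi x) x := by
    intro x hx
    have h1 : HasDerivAt (fun y : ℝ => y ^ (-δ)) (-δ * x ^ (-δ-1)) x :=
      Real.hasDerivAt_rpow_const (Or.inl hx.1.ne')
    have h2 : HasDerivAt (fun y : ℝ => 1 - Real.cos y) (Real.sin x) x := by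
      simpa using (Real.hasDerivAt_cos x).const_sub 1
    have h3 := h1.mul h2
    have : ψ x = -δ * x ^ (-δ-1) * (1 - Real.cos x) + x ^ (-δ) * Real.sin x := by
      rw [hψ]; ring
    rw [this]
    exact h3.hasDerivWithinAt
  have key := intervalIntegral.integral_eq_sub_of_hasDeriv_right_of_le hA.le hcont hderiv hψint
  have hG0 : G 0 = 0 := by rw [hG]; simp
  rw [hG0, sub_zero] at key
  have e1 : ∫ x in (0:ℝ)..A, ψ x
      = (∫ x in (0:ℝ)..A, x ^ (-δ) * Real.sin x)
        - δ * ∫ x in (0:ℝ)..A, x ^ (-δ-1) * (1 - Real.cos x) := by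
    rw [hψ]
    rw [intervalIntegral.integral_sub hfint (hφint.const_mul δ),
      intervalIntegral.integral_const_mul]
  rw [e1] at key
  have : G A = A ^ (-δ) * (1 - Real.cos A) := rfl
  linarith [key]

/-- Mellin transform of the sine function for exponents in `(1,2)`:
`∫_0^∞ x^{-δ} sin x dx = Γ(1-δ) cos(πδ/2)`, as an improper (limit of interval) integral. -/
theorem mellin_sin_extended (δ : ℝ) (hδ1 : 1 < δ) (hδ2 : δ < 2) :
    Tendsto (fun A : ℝ => ∫ x in (0 : ℝ)..A, x ^ (-δ) * Real.sin x) atTop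
      (nhds (Real.Gamma (1 - δ) * Real.cos (π * δ / 2))) := by
  have hδ0 : (0:ℝ) < δ := by linarith
  -- limit of boundary term
  have h1 : Tendsto (fun A : ℝ => A ^ (-δ) * (1 - Real.cos A)) atTop (nhds 0) := by
    have hb : ∀ᶠ A : ℝ in atTop, ‖A ^ (-δ) * (1 - Real.cos A)‖ ≤ 2 * A ^ (-δ) := by
      filter_upwards [eventually_gt_atTop (0:ℝ)] with A hA
      rw [Real.norm_eq_abs, abs_mul, abs_of_nonneg (Real.rpow_nonneg hA.le _)]
      have hcos1 := Real.cos_le_one A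
      have hcos2 := Real.neg_one_le_cos A
      have : |1 - Real.cos A| ≤ 2 := by rw [abs_le]; constructor <;> linarith
      calc A ^ (-δ) * |1 - Real.cos A| ≤ A ^ (-δ) * 2 :=
            mul_le_mul_of_nonneg_left this (Real.rpow_nonneg hA.le _)
        _ = 2 * A ^ (-δ) := by ring
    have ht : Tendsto (fun A : ℝ => 2 * A ^ (-δ)) atTop (nhds 0) := by
      simpa using (tendsto_rpow_neg_atTop hδ0).const_mul 2
    exact squeeze_zero_norm' hb ht
  -- limit of the phi integral
  have h2 : Tendsto (fun A : ℝ => ∫ x in (0:ℝ)..A, x ^ (-δ-1) * (1 - Real.cos x)) atTop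
      (nhds (∫ x in Ioi (0:ℝ), x ^ (-δ-1) * (1 - Real.cos x))) :=
    intervalIntegral_tendsto_integral_Ioi 0 (msx_phi_integrable δ hδ1 hδ2) tendsto_id
  have h3 := h1.add (h2.const_mul δ)
  rw [zero_add] at h3
  have heq : ∀ᶠ A : ℝ in atTop, A ^ (-δ) * (1 - Real.cos A)
      + δ * ∫ x in (0:ℝ)..A, x ^ (-δ-1) * (1 - Real.cos x)
      = ∫ x in (0:ℝ)..A, x ^ (-δ) * Real.sin x := by
    filter_upwards [eventually_gt_atTop (0:ℝ)] with A hA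
    exact (msx_ibp δ hδ1 hδ2 hA).symm
  have h4 := h3.congr' heq
  -- final algebra
  have hval : δ * ∫ x in Ioi (0:ℝ), x ^ (-δ-1) * (1 - Real.cos x)
      = Real.Gamma (1 - δ) * Real.cos (π * δ / 2) := by
    rw [msx_phi_value δ hδ1 hδ2]
    have hπ := Real.pi_pos
    have hs : 0 < Real.sin (π * δ / 2) := by
      apply Real.sin_pos_of_pos_of_lt_pi
      · positivity
      · nlinarith
    have hc : Real.cos (π * δ / 2) < 0 := by
      apply Real.cos_neg_of_pi_div_two_lt_of_lt
      · nlinarith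
      · nlinarith
    have hΓδ : 0 < Real.Gamma δ := Real.Gamma_pos_of_pos hδ0
    have hA1 : Real.Gamma (δ+1) = δ * Real.Gamma δ := Real.Gamma_add_one hδ0.ne'
    have hrefl := Real.Gamma_mul_Gamma_one_sub δ
    have hsin2 : Real.sin (π * δ) = 2 * Real.sin (π * δ / 2) * Real.cos (π * δ / 2) := by
      rw [← Real.sin_two_mul]; congr 1; ring
    have hΓ1δ : Real.Gamma (1-δ) = π / Real.sin (π * δ) / Real.Gamma δ := by
      rw [eq_div_iff hΓδ.ne', mul_comm]
      exact hrefl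
    set sv := Real.sin (π * δ / 2) with hsv
    set cv := Real.cos (π * δ / 2) with hcv
    set gv := Real.Gamma δ with hgv
    rw [hA1, hΓ1δ, hsin2]
    rw [div_div, div_div, div_mul_eq_mul_div]
    have hd1 : 2 * sv * (δ * gv) ≠ 0 := by positivity
    have hd2 : 2 * sv * cv * gv ≠ 0 :=
      mul_ne_zero (mul_ne_zero (by positivity) hc.ne) hΓδ.ne'
    rw [← mul_div_assoc, div_eq_div_iff hd1 hd2]
    ring
  rw [hval] at h4
  exact h4
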